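/- Let p > 1 and A ∈ (0,1). If every unit vector in a subspace W ⊂ K ⊗ E has largest Schmidt coefficient μ₁ with μ₁² ≤ A, then for the quantum channel N(ρ) = Tr_E(VρV*) with isometry V of range W, the minimal output Rényi p-entropy satisfies S_p^min(N) ≥ (1/(1−p))·log₂((1−A)ᵖ + Aᵖ). -/

import Mathlib

noncomputable section

/-- The simple tensor `x ⊗ y` of two vectors, realized in `EuclideanSpace ℂ (ι × κ)`. -/
def tens {ι κ : Type*} [Fintype ι] [Fintype κ] (x : EuclideanSpace ℂ ι) (y : EuclideanSpace ℂ κ) :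
    EuclideanSpace ℂ (ι × κ) :=
  WithLp.toLp 2 (fun p : ι × κ => x p.1 * y p.2)

/-- `h = ∑ i, μ i • (u i ⊗ v i)` is a Schmidt decomposition of `h`. -/
def IsSchmidt {ι κ : Type*} [Fintype ι] [Fintype κ] (h : EuclideanSpace ℂ (ι × κ)) {r : ℕ}
    (μ : Fin r → ℝ) (u : Fin r → EuclideanSpace ℂ ι) (v : Fin r → EuclideanSpace ℂ κ) : Prop :=
  (∀ i, 0 ≤ μ i) ∧ Orthonormal ℂ u ∧ Orthonormal ℂ v ∧
    h = ∑ i, (μ i : ℂ) • tens (u i) (v i)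

/-- Inner product of simple tensors. -/
lemma inner_tens {ι κ : Type*} [Fintype ι] [Fintype κ]
    (x x' : EuclideanSpace ℂ ι) (y y' : EuclideanSpace ℂ κ) :
    (inner ℂ (tens x y) (tens x' y') : ℂ) = (inner ℂ x x' : ℂ) * (inner ℂ y y' : ℂ) := by
  simp only [PiLp.inner_apply, RCLike.inner_apply, tens, map_mul]
  rw [Finset.sum_mul_sum, Fintype.sum_prod_type]
  exact Finset.sum_congr rfl fun i _ => Finset.sum_congr rfl fun j _ => by ring

/-- Binary superadditivity of `rpow` for `p ≥ 1`. -/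
lemma my_add_rpow_le (a b p : ℝ) (ha : 0 ≤ a) (hb : 0 ≤ b) (hp : 1 ≤ p) :
    a ^ p + b ^ p ≤ (a + b) ^ p := by
  have h := NNReal.add_rpow_le_rpow_add (⟨a, ha⟩ : NNReal) (⟨b, hb⟩ : NNReal) hp
  rw [← NNReal.coe_le_coe] at h
  exact Real.add_rpow_le_rpow_add ha hb hp

/-- Finset superadditivity of `rpow` for `p ≥ 1`. -/
lemma my_sum_rpow_le {ι : Type*} (s : Finset ι) (f : ι → ℝ) {p : ℝ} (hp : 1 ≤ p)
    (hf : ∀ i ∈ s, 0 ≤ f i) : ∑ i ∈ s, f i ^ p ≤ (∑ i ∈ s, f i) ^ p := by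
  induction s using Finset.cons_induction with
  | empty => simp [Real.zero_rpow (one_pos.trans_le hp).ne']
  | cons a s ha ih =>
    rw [Finset.sum_cons, Finset.sum_cons]
    have h1 : ∑ i ∈ s, f i ^ p ≤ (∑ i ∈ s, f i) ^ p :=
      ih fun i hi => hf i (Finset.mem_cons_of_mem hi)
    have h2 : f a ^ p + (∑ i ∈ s, f i) ^ p ≤ (f a + ∑ i ∈ s, f i) ^ p :=
      my_add_rpow_le _ _ _ (hf a (Finset.mem_cons_self a s))
        (Finset.sum_nonneg fun i hi => hf i (Finset.mem_cons_of_mem hi)) hp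
    linarith
/-- Tangent line inequality for `rpow`. -/
lemma my_tangent {x y p : ℝ} (hx : 0 ≤ x) (hy : 0 ≤ y) (hp : 1 < p) :
    y ^ p + p * y ^ (p - 1) * (x - y) ≤ x ^ p := by
  rcases hy.eq_or_lt with h | hy
  · rw [← h, Real.zero_rpow (by positivity), Real.zero_rpow (by linarith : p - 1 ≠ 0)]
    simpa using Real.rpow_nonneg hx p
  · have hB := one_add_mul_self_le_rpow_one_add
      (s := (x - y) / y) (by rw [le_div_iff₀ hy]; linarith) hp.le
    have hxy : 1 + (x - y) / y = x / y := by field_simp; ring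
    rw [hxy, Real.div_rpow hx hy.le] at hB
    have hyp : (0:ℝ) < y ^ p := Real.rpow_pos_of_pos hy p
    have hmul := mul_le_mul_of_nonneg_left hB hyp.le
    rw [mul_div_cancel₀ _ hyp.ne'] at hmul
    have hsplit : y ^ p * (1 + p * ((x - y) / y)) = y ^ p + p * y ^ (p - 1) * (x - y) := by
      rw [Real.rpow_sub_one hy.ne']
      field_simp
    linarith [hsplit ▸ hmul]

/-- `t ↦ t^p + (1-t)^p` is monotone on `[1/2, 1]` for `p > 1`. -/
lemma my_mono {s t p : ℝ} (hs : 1/2 ≤ s) (hst : s ≤ t) (ht : t ≤ 1) (hp : 1 < p) :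
    s ^ p + (1 - s) ^ p ≤ t ^ p + (1 - t) ^ p := by
  have hb0 : (0:ℝ) ≤ 1 - s := by linarith
  have h1 := my_tangent (x := t) (y := s) (by linarith) (by linarith) hp
  have h2 := my_tangent (x := 1 - t) (y := 1 - s) (by linarith) hb0 hp
  have h3 : (1 - s) ^ (p - 1) ≤ s ^ (p - 1) :=
    Real.rpow_le_rpow hb0 (by linarith) (by linarith)
  nlinarith [mul_nonneg (mul_nonneg (by linarith : (0:ℝ) ≤ p) (by linarith : (0:ℝ) ≤ t - s))
    (sub_nonneg.2 h3)]

/-- The key analytic inequality. -/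
lemma my_analytic {r : ℕ} (x : Fin r → ℝ) {p A : ℝ} (hp : 1 < p) (hA0 : 0 < A) (hA1 : A < 1)
    (hx0 : ∀ i, 0 ≤ x i) (hxA : ∀ i, x i ≤ A) (hsum : ∑ i, x i = 1) :
    ∑ i, x i ^ p ≤ (1 - A) ^ p + A ^ p := by
  have hr : (Finset.univ : Finset (Fin r)).Nonempty := by
    rcases (Finset.univ (α := Fin r)).eq_empty_or_nonempty with h | h
    · rw [h] at hsum; simp at hsum
    · exact h
  obtain ⟨i₀, -, hmax⟩ := Finset.exists_max_image Finset.univ x hr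
  set t := x i₀ with ht
  have ht0 : 0 ≤ t := hx0 i₀
  have htA : t ≤ A := hxA i₀
  rcases le_or_gt (1/2 : ℝ) t with hhalf | hhalf
  · -- bound by t^p + (1-t)^p and use monotonicity
    have hsplit : ∑ i, x i ^ p = x i₀ ^ p + ∑ i ∈ Finset.univ.erase i₀, x i ^ p := by
      rw [← Finset.sum_erase_add _ _ (Finset.mem_univ i₀)]; ring
    have hrest : ∑ i ∈ Finset.univ.erase i₀, x i ^ p ≤
        (∑ i ∈ Finset.univ.erase i₀, x i) ^ p :=
      my_sum_rpow_le _ _ hp.le fun i _ => hx0 i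
    have hsum' : ∑ i ∈ Finset.univ.erase i₀, x i = 1 - t := by
      have := Finset.sum_erase_add Finset.univ x (Finset.mem_univ i₀)
      rw [hsum] at this; linarith
    have hM := my_mono hhalf htA hA1.le hp
    rw [hsum'] at hrest
    linarith
  · -- bound each term by x i * t^(p-1)
    have hterm : ∀ i, x i ^ p ≤ x i * t ^ (p - 1) := by
      intro i
      rcases (hx0 i).eq_or_lt with h | h
      · rw [← h, Real.zero_rpow (by positivity)]; simp
      · calc x i ^ p = x i * x i ^ (p - 1) := by
              nth_rewrite 1 [show p = 1 + (p - 1) by ring]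
              rw [Real.rpow_add h, Real.rpow_one]
          _ ≤ x i * t ^ (p - 1) := by
              apply mul_le_mul_of_nonneg_left _ (hx0 i)
              exact Real.rpow_le_rpow (hx0 i) (hmax i (Finset.mem_univ i)) (by linarith)
    have hS : ∑ i, x i ^ p ≤ t ^ (p - 1) := by
      calc ∑ i, x i ^ p ≤ ∑ i, x i * t ^ (p - 1) := Finset.sum_le_sum fun i _ => hterm i
        _ = t ^ (p - 1) := by rw [← Finset.sum_mul, hsum, one_mul]
    rcases le_or_gt A (1/2 : ℝ) with hA2 | hA2
    · -- t ≤ A ≤ 1/2 : t^(p-1) ≤ A^(p-1) = A^p + A^(p-1)(1-A) ≤ A^p + (1-A)^p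
      have h1 : t ^ (p - 1) ≤ A ^ (p - 1) := Real.rpow_le_rpow ht0 htA (by linarith)
      have h2 : A ^ (p - 1) * A = A ^ p := by
        rw [← Real.rpow_add_one hA0.ne' (p - 1)]; ring_nf
      have h3 : A ^ (p - 1) * (1 - A) ≤ (1 - A) ^ (p - 1) * (1 - A) := by
        apply mul_le_mul_of_nonneg_right _ (by linarith)
        exact Real.rpow_le_rpow hA0.le (by linarith) (by linarith)
      have h4 : (1 - A) ^ (p - 1) * (1 - A) = (1 - A) ^ p := by
        rw [← Real.rpow_add_one (by linarith : (1:ℝ) - A ≠ 0) (p - 1)]; ring_nf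
      nlinarith
    · -- t < 1/2 < A : t^(p-1) ≤ (1/2)^(p-1) = (1/2)^p + (1/2)^p ≤ A^p + (1-A)^p
      have h1 : t ^ (p - 1) ≤ (1/2 : ℝ) ^ (p - 1) :=
        Real.rpow_le_rpow ht0 hhalf.le (by linarith)
      have h2 : (1/2 : ℝ) ^ (p - 1) = (1/2 : ℝ) ^ p + (1/2 : ℝ) ^ p := by
        rw [Real.rpow_sub_one (by norm_num : (1/2 : ℝ) ≠ 0)]
        ring
      have h3 := my_mono (le_refl (1/2 : ℝ)) hA2.le hA1.le hp
      norm_num at h3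
      linarith

/-- let `p > 1`, `A ∈ (0,1)`, and `W = ran V ⊂ K ⊗ E` for an isometry
`V : H → K ⊗ E`, such that every unit vector in `W` has largest Schmidt coefficient `μ₁` with
`μ₁² ≤ A`.  Then every output `N(|h⟩⟨h|) = Tr_E(V|h⟩⟨h|V*)` of the channel `N`, whose
eigenvalues are the squares `μᵢ²` of the Schmidt coefficients of `V h`, has Rényi `p`-entropy at
least `(1/(1-p)) log₂ ((1-A)ᵖ + Aᵖ)`; i.e. `S_p^min(N) ≥ (1/(1-p)) log₂ ((1-A)ᵖ + Aᵖ)`. -/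
theorem min_output_renyi_lower_bound (dK dE m : ℕ) (p A : ℝ) (hp : 1 < p)
    (hA : A ∈ Set.Ioo (0 : ℝ) 1)
    (W : Submodule ℂ (EuclideanSpace ℂ (Fin dK × Fin dE)))
    (V : EuclideanSpace ℂ (Fin m) →ₗᵢ[ℂ] EuclideanSpace ℂ (Fin dK × Fin dE))
    (hV : LinearMap.range V.toLinearMap = W)
    (hbound : ∀ ξ ∈ W, ‖ξ‖ = 1 → ∀ (r : ℕ) (μ : Fin r → ℝ)
      (u : Fin r → EuclideanSpace ℂ (Fin dK)) (v : Fin r → EuclideanSpace ℂ (Fin dE))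
      (μ₁ : ℝ), IsSchmidt ξ μ u v → IsGreatest (Set.range μ) μ₁ → μ₁ ^ 2 ≤ A) :
    ∀ h : EuclideanSpace ℂ (Fin m), ‖h‖ = 1 → ∀ (r : ℕ) (μ : Fin r → ℝ)
      (u : Fin r → EuclideanSpace ℂ (Fin dK)) (v : Fin r → EuclideanSpace ℂ (Fin dE)),
      IsSchmidt (V h) μ u v →
      (1 / (1 - p)) * Real.logb 2 (∑ i, (μ i ^ 2) ^ p) ≥
        (1 / (1 - p)) * Real.logb 2 ((1 - A) ^ p + A ^ p) := by
  intro h hh r μ u v hS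
  obtain ⟨hμ0, hu, hv, hrep⟩ := hS
  have hnormV : ‖V h‖ = 1 := by rw [V.norm_map]; exact hh
  -- orthonormality of the simple tensors
  have hT : ∀ i j : Fin r, (inner ℂ (tens (u i) (v i)) (tens (u j) (v j)) : ℂ) =
      if i = j then 1 else 0 := by
    intro i j
    rw [inner_tens, orthonormal_iff_ite.mp hu, orthonormal_iff_ite.mp hv]
    by_cases hij : i = j <;> simp [hij]
  -- sum of squared Schmidt coefficients is 1
  have hinner : (inner ℂ (V h) (V h) : ℂ) = ∑ i, (μ i : ℂ) * (μ i : ℂ) := by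
    rw [hrep, sum_inner]
    refine Finset.sum_congr rfl fun i _ => ?_
    rw [inner_smul_left, inner_sum]
    simp only [inner_smul_right, hT, mul_ite, mul_one, mul_zero]
    simp [Complex.conj_ofReal]
  have hsum : ∑ i, μ i ^ 2 = 1 := by
    have h1 : (inner ℂ (V h) (V h) : ℂ) = ((‖V h‖ : ℂ)) ^ 2 := inner_self_eq_norm_sq_to_K (V h)
    rw [hinner, hnormV] at h1
    norm_num at h1
    have h2 : ((∑ i, μ i ^ 2 : ℝ) : ℂ) = 1 := by
      push_cast
      rw [← h1]
      exact Finset.sum_congr rfl fun i _ => by ring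
    exact_mod_cast h2
  -- each squared Schmidt coefficient is at most A
  have hr : (Finset.univ : Finset (Fin r)).Nonempty := by
    rcases (Finset.univ (α := Fin r)).eq_empty_or_nonempty with he | he
    · rw [he] at hsum; simp at hsum
    · exact he
  obtain ⟨i₀, -, hmax⟩ := Finset.exists_max_image Finset.univ μ hr
  have hVhW : V h ∈ W := by rw [← hV]; exact ⟨h, rfl⟩
  have hgr : IsGreatest (Set.range μ) (μ i₀) :=
    ⟨⟨i₀, rfl⟩, by rintro y ⟨j, rfl⟩; exact hmax j (Finset.mem_univ j)⟩
  have hμ₀A : μ i₀ ^ 2 ≤ A :=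
    hbound (V h) hVhW hnormV r μ u v (μ i₀) ⟨hμ0, hu, hv, hrep⟩ hgr
  have hxA : ∀ i, μ i ^ 2 ≤ A := by
    intro i
    calc μ i ^ 2 ≤ μ i₀ ^ 2 := by
          have := hmax i (Finset.mem_univ i)
          nlinarith [hμ0 i, hμ0 i₀]
      _ ≤ A := hμ₀A
  -- the analytic inequality
  have hkey : ∑ i, (μ i ^ 2) ^ p ≤ (1 - A) ^ p + A ^ p :=
    my_analytic (fun i => μ i ^ 2) hp hA.1 hA.2 (fun i => sq_nonneg _) hxA hsum
  -- positivity of the left-hand sum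
  have hi₀pos : 0 < μ i₀ ^ 2 := by
    rcases (sq_nonneg (μ i₀)).eq_or_lt with he | he
    · exfalso
      have hall : ∀ i, μ i ^ 2 = 0 := fun i =>
        le_antisymm (by nlinarith [hmax i (Finset.mem_univ i), hμ0 i, hμ0 i₀]) (sq_nonneg _)
      rw [Finset.sum_congr rfl fun i _ => hall i] at hsum
      simp at hsum
    · exact he
  have hSpos : 0 < ∑ i, (μ i ^ 2) ^ p := by
    refine Finset.sum_pos' (fun i _ => Real.rpow_nonneg (sq_nonneg _) p) ?_
    exact ⟨i₀, Finset.mem_univ i₀, Real.rpow_pos_of_pos hi₀pos p⟩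
  -- conclude via monotonicity of logb and sign of 1/(1-p)
  have hlog : Real.logb 2 (∑ i, (μ i ^ 2) ^ p) ≤ Real.logb 2 ((1 - A) ^ p + A ^ p) :=
    Real.logb_le_logb_of_le (by norm_num) hSpos hkey
  have hc : 1 / (1 - p) ≤ 0 := by
    apply div_nonpos_of_nonneg_of_nonpos <;> linarith
  exact mul_le_mul_of_nonpos_left hlog hc
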